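/- Let X be a process with cadlag paths in R^d, I = [a, a + t] an interval, θ > 0, and define τ_0 = a, τ_j = inf{ s > τ_{j−1} : |X(s) − X(τ_{j−1})| > θ }. If τ_k − τ_0 > t, then the image X(I) can be covered by k balls of radius θ. -/
import Mathlib


open MeasureTheory Metric Set ENNReal

noncomputable section

/-- For a cadlag path `f : [0,∞) → ℝ^d`, with the successive exit times
`τ_0 = a`, `τ_{j+1} = inf {s > τ_j : |f(s) - f(τ_j)| > θ}` (values in `ℝ≥0∞`, `inf ∅ = ∞`),
if `τ_k - τ_0 > t` then the image `f([a, a+t])` is covered by `k` closed balls of radius `θ`. -/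
theorem stmt1 {d : ℕ} (f : ℝ → EuclideanSpace ℝ (Fin d))
    (hrc : ∀ s : ℝ, ContinuousWithinAt f (Set.Ici s) s)
    (hll : ∀ s : ℝ, ∃ L : EuclideanSpace ℝ (Fin d),
      Filter.Tendsto f (nhdsWithin s (Set.Iio s)) (nhds L))
    (a t θ : ℝ) (ha : 0 ≤ a) (ht : 0 < t) (hθ : 0 < θ)
    (τ : ℕ → ℝ≥0∞)
    (hτ0 : τ 0 = ENNReal.ofReal a)
    (hτ : ∀ j : ℕ, τ (j + 1) =
      sInf {s : ℝ≥0∞ | τ j < s ∧ s ≠ ⊤ ∧ θ < dist (f s.toReal) (f (τ j).toReal)})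
    (k : ℕ)
    (hk : ENNReal.ofReal t < τ k - τ 0) :
    ∃ c : Fin k → EuclideanSpace ℝ (Fin d),
      f '' Set.Icc a (a + t) ⊆ ⋃ i : Fin k, Metric.closedBall (c i) θ := by
  classical
  -- τ k exceeds ofReal (a + t)
  have hτk : ENNReal.ofReal (a + t) < τ k := by
    by_contra h
    push_neg at h
    have : τ k - τ 0 ≤ ENNReal.ofReal t := by
      rw [hτ0, tsub_le_iff_right]
      calc τ k ≤ ENNReal.ofReal (a + t) := h
        _ = ENNReal.ofReal t + ENNReal.ofReal a := by
            rw [← ENNReal.ofReal_add ht.le ha, add_comm]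
    exact absurd (lt_of_lt_of_le hk this) (lt_irrefl _)
  -- key lemma: between τ j and τ (j+1), f stays within θ of f (τ j).toReal
  have key : ∀ (s : ℝ) (j : ℕ), 0 ≤ s → τ j ≤ ENNReal.ofReal s →
      ENNReal.ofReal s < τ (j + 1) → dist (f s) (f (τ j).toReal) ≤ θ := by
    intro s j hs0 h1 h2
    rcases eq_or_lt_of_le h1 with heq | hlt
    · have hts : (τ j).toReal = s := by rw [heq, ENNReal.toReal_ofReal hs0]
      rw [hts]
      simp [hθ.le]
    · by_contra hd
      push_neg at hd
      have hmem : ENNReal.ofReal s ∈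
          {u : ℝ≥0∞ | τ j < u ∧ u ≠ ⊤ ∧ θ < dist (f u.toReal) (f (τ j).toReal)} :=
        ⟨hlt, ENNReal.ofReal_ne_top, by rwa [ENNReal.toReal_ofReal hs0]⟩
      have : τ (j + 1) ≤ ENNReal.ofReal s := by
        rw [hτ j]; exact sInf_le hmem
      exact absurd (lt_of_le_of_lt this h2) (lt_irrefl _)
  refine ⟨fun i => f (τ (i : ℕ)).toReal, ?_⟩
  rintro _ ⟨s, hs, rfl⟩
  have hs0 : 0 ≤ s := le_trans ha hs.1
  have hP : ENNReal.ofReal s < τ k :=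
    lt_of_le_of_lt (ENNReal.ofReal_le_ofReal hs.2) hτk
  have hex : ∃ m, ENNReal.ofReal s < τ m := ⟨k, hP⟩
  have hmk : Nat.find hex ≤ k := Nat.find_le hP
  have hm0 : Nat.find hex ≠ 0 := by
    intro h0
    have := Nat.find_spec hex
    rw [h0, hτ0] at this
    exact absurd (lt_of_lt_of_le this (ENNReal.ofReal_le_ofReal hs.1)) (lt_irrefl _)
  obtain ⟨j, hmj⟩ : ∃ j, Nat.find hex = j + 1 := Nat.exists_eq_succ_of_ne_zero hm0
  have hjk : j < k := by omega
  have h1 : τ j ≤ ENNReal.ofReal s := by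
    by_contra h
    push_neg at h
    have hle : Nat.find hex ≤ j := Nat.find_le h
    omega
  have h2 : ENNReal.ofReal s < τ (j + 1) := by
    rw [← hmj]; exact Nat.find_spec hex
  exact Set.mem_iUnion.2 ⟨⟨j, hjk⟩, Metric.mem_closedBall.2 (key s j hs0 h1 h2)⟩
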